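/- Nonvanishing of the wedge-boundary gradient: under ‖HV^s‖ ≥ (|λ_s|/a)‖V^u‖ and ‖HV^u‖ ≤ aλ_u‖V^u‖ at every point (Condition I), and sin β ≤ (sin ω₁/(4a²√2))·|λ_s/λ_u| with 0 < β < π/4, a > 1, ω₁ ∈ (0,π/4), one has ‖∇ψ^u_β‖ = ‖cos β·HV^s + sin β·HV^u‖ ≥ (|λ_s|/(2a√2))·‖V^u‖ > 0. -/

import Mathlib

open Real

/-- Nonvanishing of the wedge-boundary gradient: under Condition I bounds
`‖HV^s‖ ≥ (|λ_s|/a)‖V^u‖`, `‖HV^u‖ ≤ aλ_u‖V^u‖` and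
`sin β ≤ (sin ω₁/(4a²√2))·|λ_s/λ_u|` with `0 < β < π/4`, `a > 1`,
`ω₁ ∈ (0,π/4)`, one has
`‖cos β·HV^s + sin β·HV^u‖ ≥ (|λ_s|/(2a√2))·‖V^u‖ > 0`. -/
theorem stmt19 (a lu ls β ω₁ : ℝ) (ha : 1 < a) (hls : ls < 0) (hlu : 0 < lu)
    (hβ : 0 < β) (hβ' : β < Real.pi / 4) (hω : 0 < ω₁) (hω' : ω₁ < Real.pi / 4)
    (Vu HVs HVu : EuclideanSpace ℝ (Fin 2)) (hVu : Vu ≠ 0)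
    (h1 : |ls| / a * ‖Vu‖ ≤ ‖HVs‖)
    (h2 : ‖HVu‖ ≤ a * lu * ‖Vu‖)
    (h3 : Real.sin β ≤ Real.sin ω₁ / (4 * a^2 * Real.sqrt 2) * |ls / lu|) :
    |ls| / (2 * a * Real.sqrt 2) * ‖Vu‖
        ≤ ‖Real.cos β • HVs + Real.sin β • HVu‖ ∧
    0 < ‖Real.cos β • HVs + Real.sin β • HVu‖ := by
  have hs2 : (0:ℝ) < Real.sqrt 2 := by positivity
  have hs22 : Real.sqrt 2 * Real.sqrt 2 = 2 := Real.mul_self_sqrt (by norm_num)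
  have hs22' : Real.sqrt 2 ^ 2 = 2 := Real.sq_sqrt (by norm_num)
  have hs24 : Real.sqrt 2 ^ 4 = 4 := by
    rw [show (4:ℕ) = 2 * 2 from rfl, pow_mul, hs22']; norm_num
  have hπ : (0:ℝ) < Real.pi := Real.pi_pos
  have ha0 : (0:ℝ) < a := by linarith
  have hβpi : β ≤ Real.pi := le_trans hβ'.le (by linarith)
  have hcos : Real.sqrt 2 / 2 ≤ Real.cos β := by
    rw [← Real.cos_pi_div_four]
    exact Real.cos_le_cos_of_nonneg_of_le_pi hβ.le (by linarith) hβ'.le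
  have hcos0 : 0 ≤ Real.cos β := by linarith
  have hsin0 : 0 ≤ Real.sin β := Real.sin_nonneg_of_nonneg_of_le_pi hβ.le hβpi
  have hsω0 : 0 ≤ Real.sin ω₁ :=
    Real.sin_nonneg_of_nonneg_of_le_pi hω.le (by linarith)
  have hsinω : Real.sin ω₁ ≤ 1 := Real.sin_le_one _
  have hVu0 : (0:ℝ) < ‖Vu‖ := norm_pos_iff.mpr hVu
  have hls0 : 0 < |ls| := abs_pos.mpr hls.ne
  have habs : |ls / lu| = |ls| / lu := by rw [abs_div, abs_of_pos hlu]
  rw [habs] at h3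
  -- reverse triangle inequality
  have htri : Real.cos β * ‖HVs‖ - Real.sin β * ‖HVu‖
      ≤ ‖Real.cos β • HVs + Real.sin β • HVu‖ := by
    have hn := norm_sub_le (Real.cos β • HVs + Real.sin β • HVu) (Real.sin β • HVu)
    simp only [add_sub_cancel_right] at hn
    have h4 : ‖Real.cos β • HVs‖ = Real.cos β * ‖HVs‖ := by
      rw [norm_smul, Real.norm_eq_abs, abs_of_nonneg hcos0]
    have h5 : ‖Real.sin β • HVu‖ = Real.sin β * ‖HVu‖ := by
      rw [norm_smul, Real.norm_eq_abs, abs_of_nonneg hsin0]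
    linarith
  have hl1 : Real.sqrt 2 / 2 * (|ls| / a * ‖Vu‖) ≤ Real.cos β * ‖HVs‖ :=
    mul_le_mul hcos h1 (by positivity) hcos0
  have hl2 : Real.sin β * ‖HVu‖ ≤
      (Real.sin ω₁ / (4 * a^2 * Real.sqrt 2) * (|ls| / lu)) * (a * lu * ‖Vu‖) :=
    mul_le_mul h3 h2 (norm_nonneg _)
      (mul_nonneg (div_nonneg hsω0 (by positivity)) (by positivity))
  have heq : (Real.sin ω₁ / (4 * a^2 * Real.sqrt 2) * (|ls| / lu)) * (a * lu * ‖Vu‖)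
      = Real.sin ω₁ * (|ls| / (4 * a * Real.sqrt 2) * ‖Vu‖) := by
    field_simp
  have hl3 : (Real.sin ω₁ / (4 * a^2 * Real.sqrt 2) * (|ls| / lu)) * (a * lu * ‖Vu‖)
      ≤ |ls| / (4 * a * Real.sqrt 2) * ‖Vu‖ := by
    rw [heq]
    exact mul_le_of_le_one_left (by positivity) hsinω
  have e2 : |ls| / (2 * a * Real.sqrt 2) * ‖Vu‖
      ≤ Real.sqrt 2 / 2 * (|ls| / a * ‖Vu‖) - |ls| / (4 * a * Real.sqrt 2) * ‖Vu‖ := by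
    rw [← sub_nonneg]
    have key : Real.sqrt 2 / 2 * (|ls| / a * ‖Vu‖) - |ls| / (4 * a * Real.sqrt 2) * ‖Vu‖
        - |ls| / (2 * a * Real.sqrt 2) * ‖Vu‖ = |ls| * ‖Vu‖ / (4 * a * Real.sqrt 2) := by
      field_simp
      ring_nf
      rw [hs22']; norm_num
    rw [key]; positivity
  have key : |ls| / (2 * a * Real.sqrt 2) * ‖Vu‖
      ≤ ‖Real.cos β • HVs + Real.sin β • HVu‖ := by linarith
  exact ⟨key, lt_of_lt_of_le (by positivity) key⟩
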